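/- Let 0<p≤1, let A be a p-Banach *-algebra, let B be the ‖·‖-closure in A of some commutative *-subalgebra of A, and let T be an injective *-representation of A on a Hilbert space H satisfying ‖T(x)‖_op^p = lim_{n→∞} ‖x^n‖^{1/n} for every self-adjoint x ∈ B. If the identity operator I on H lies in the operator-norm closure of T(B) in B(H), then there exists e ∈ B with T(e) = I, and this e is a unit for the whole algebra A. -/

import Mathlib

open Filter

/-- `nupow x n = x^(n+1)`: powers in a possibly non-unital algebra. -/
noncomputable def nupow {A : Type*} [Mul A] (x : A) : ℕ → A
  | 0 => x
  | n + 1 => x * nupow x n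

lemma catalan_le_four_pow (n : ℕ) : catalan n ≤ 4 ^ n := by
  rw [catalan_eq_centralBinom_div]
  calc n.centralBinom / (n + 1) ≤ n.centralBinom := Nat.div_le_self _ _
    _ ≤ (2 * n + 1).choose n := by
        rw [Nat.centralBinom]
        exact Nat.choose_le_choose n (by omega)
    _ ≤ 4 ^ n := Nat.choose_middle_le_pow n

lemma nupow_comm {A : Type*} [NonUnitalRing A] (x : A) (n : ℕ) :
    x * nupow x n = nupow x n * x := by
  induction n with
  | zero => rfl
  | succ n ih =>
    show x * (x * nupow x n) = (x * nupow x n) * x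
    rw [mul_assoc, ih]

set_option maxHeartbeats 4000000 in
/-- Let `0 < p ≤ 1`, `A` a `p`-Banach `*`-algebra, `B` the closure of a commutative
`*`-subalgebra `S` of `A`, and `T` an injective `*`-representation of `A` on a Hilbert
space `H` with `‖T x‖^p = lim ‖x^n‖^(1/n)` for all self-adjoint `x ∈ B`.  If the identity
operator lies in the operator-norm closure of `T(B)`, then there is `e ∈ B` with `T e = 1`
and `e` is a unit of all of `A`. -/
theorem unit_lemma_for_pBanach_algebras
    (p : ℝ) (hp0 : 0 < p) (hp1 : p ≤ 1)
    {A : Type*} [NonUnitalRing A] [Module ℂ A] [SMulCommClass ℂ A A] [IsScalarTower ℂ A A]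
    [StarRing A] [StarModule ℂ A] [MetricSpace A] [CompleteSpace A]
    (nrm : A → ℝ)
    (hnonneg : ∀ x : A, 0 ≤ nrm x)
    (hzero : ∀ x : A, nrm x = 0 ↔ x = 0)
    (hadd : ∀ x y : A, nrm (x + y) ≤ nrm x + nrm y)
    (hsmul : ∀ (c : ℂ) (x : A), nrm (c • x) = ‖c‖ ^ p * nrm x)
    (hmulle : ∀ x y : A, nrm (x * y) ≤ nrm x * nrm y)
    (hstar : ∀ x : A, nrm (star x) = nrm x)
    (hdist : ∀ x y : A, dist x y = nrm (x - y))
    {H : Type*} [NormedAddCommGroup H] [InnerProductSpace ℂ H] [CompleteSpace H]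
    (T : A →⋆ₙₐ[ℂ] (H →L[ℂ] H)) (hinj : Function.Injective T)
    (S : NonUnitalStarSubalgebra ℂ A)
    (hcomm : ∀ x ∈ S, ∀ y ∈ S, x * y = y * x)
    (hlim : ∀ x ∈ closure (S : Set A), star x = x →
      Tendsto (fun n : ℕ => nrm (nupow x n) ^ (((n : ℝ) + 1)⁻¹)) atTop (nhds (‖T x‖ ^ p)))
    (hI : (1 : H →L[ℂ] H) ∈ closure (T '' (closure (S : Set A)))) :
    ∃ e ∈ closure (S : Set A), T e = 1 ∧ ∀ a : A, e * a = a ∧ a * e = a := by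
  classical
  set B : Set A := closure (S : Set A) with hBdef
  -- basic facts about `nrm`
  have hnrm_neg : ∀ x : A, nrm (-x) = nrm x := by
    intro x
    rw [← neg_one_smul ℂ x, hsmul]
    simp [Real.one_rpow]
  -- closure of `S` is closed under the operations
  have hBadd : ∀ x ∈ B, ∀ y ∈ B, x + y ∈ B := by
    intro x hx y hy
    rw [hBdef, Metric.mem_closure_iff]
    intro ε hε
    obtain ⟨x', hx'S, hx'⟩ := Metric.mem_closure_iff.mp hx (ε / 2) (by linarith)
    obtain ⟨y', hy'S, hy'⟩ := Metric.mem_closure_iff.mp hy (ε / 2) (by linarith)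
    refine ⟨x' + y', S.add_mem hx'S hy'S, ?_⟩
    rw [hdist] at hx' hy' ⊢
    have hre : x + y - (x' + y') = (x - x') + (y - y') := by abel
    rw [hre]
    calc nrm _ ≤ nrm (x - x') + nrm (y - y') := hadd _ _
      _ < ε := by linarith
  have hBsmul : ∀ (c : ℂ), ∀ x ∈ B, c • x ∈ B := by
    intro c x hx
    rcases eq_or_ne c 0 with rfl | hc
    · rw [zero_smul]; exact subset_closure S.zero_mem
    · rw [hBdef, Metric.mem_closure_iff]
      intro ε hε
      have habs : (0:ℝ) < ‖c‖ ^ p :=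
        Real.rpow_pos_of_pos (norm_pos_iff.mpr hc) p
      obtain ⟨x', hx'S, hx'⟩ :=
        Metric.mem_closure_iff.mp hx (ε / (‖c‖ ^ p)) (by positivity)
      refine ⟨c • x', SMulMemClass.smul_mem c hx'S, ?_⟩
      rw [hdist] at hx' ⊢
      rw [← smul_sub, hsmul]
      calc ‖c‖ ^ p * nrm (x - x')
          < ‖c‖ ^ p * (ε / ‖c‖ ^ p) :=
            mul_lt_mul_of_pos_left hx' habs
        _ = ε := by field_simp
  have hBstar : ∀ x ∈ B, star x ∈ B := by
    intro x hx
    rw [hBdef, Metric.mem_closure_iff]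
    intro ε hε
    obtain ⟨x', hx'S, hx'⟩ := Metric.mem_closure_iff.mp hx ε hε
    refine ⟨star x', star_mem hx'S, ?_⟩
    rw [hdist] at hx' ⊢
    rw [← star_sub, hstar]
    exact hx'
  have hBmul : ∀ x ∈ B, ∀ y ∈ B, x * y ∈ B := by
    intro x hx y hy
    rw [hBdef, Metric.mem_closure_iff]
    intro ε hε
    have hδ1 : (0:ℝ) < min 1 (ε / (2 * (nrm y + 1))) := by
      have : (0:ℝ) < nrm y + 1 := by have := hnonneg y; linarith
      have : (0:ℝ) < ε / (2 * (nrm y + 1)) := by positivity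
      simp [this]
    have hδ2 : (0:ℝ) < ε / (2 * (nrm x + 2)) := by
      have : (0:ℝ) < nrm x + 2 := by have := hnonneg x; linarith
      positivity
    obtain ⟨x', hx'S, hx'⟩ := Metric.mem_closure_iff.mp hx _ hδ1
    obtain ⟨y', hy'S, hy'⟩ := Metric.mem_closure_iff.mp hy _ hδ2
    refine ⟨x' * y', S.mul_mem hx'S hy'S, ?_⟩
    rw [hdist] at hx' hy' ⊢
    have hre : x * y - x' * y' = (x - x') * y + x' * (y - y') := by
      rw [sub_mul, mul_sub]; abel
    rw [hre]
    have h1 : nrm ((x - x') * y) ≤ nrm (x - x') * nrm y := hmulle _ _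
    have h2 : nrm (x' * (y - y')) ≤ nrm x' * nrm (y - y') := hmulle _ _
    have hx'le : nrm x' ≤ nrm x + 1 := by
      have h3 : nrm x' ≤ nrm (x' - x) + nrm x := by
        calc nrm x' = nrm ((x' - x) + x) := by congr 1; abel
          _ ≤ nrm (x' - x) + nrm x := hadd _ _
      have h4 : nrm (x' - x) = nrm (x - x') := by rw [← neg_sub, hnrm_neg]
      have h5 : nrm (x - x') < 1 := lt_of_lt_of_le hx' (min_le_left _ _)
      linarith
    have hxd : nrm (x - x') < ε / (2 * (nrm y + 1)) :=
      lt_of_lt_of_le hx' (min_le_right _ _)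
    have hy0 : (0:ℝ) ≤ nrm y := hnonneg y
    have hx0 : (0:ℝ) ≤ nrm x := hnonneg x
    have hd10 : (0:ℝ) ≤ nrm (x - x') := hnonneg _
    have hd20 : (0:ℝ) ≤ nrm (y - y') := hnonneg _
    calc nrm ((x - x') * y + x' * (y - y'))
        ≤ nrm ((x - x') * y) + nrm (x' * (y - y')) := hadd _ _
      _ ≤ nrm (x - x') * nrm y + nrm x' * nrm (y - y') := by linarith
      _ < ε := by
          have e1 : nrm (x - x') * nrm y ≤ (ε / (2 * (nrm y + 1))) * (nrm y + 1) := by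
            apply mul_le_mul (le_of_lt hxd) (by linarith) hy0 (by positivity)
          have e1' : (ε / (2 * (nrm y + 1))) * (nrm y + 1) = ε / 2 := by
            field_simp
          have e2 : nrm x' * nrm (y - y') < (nrm x + 2) * (ε / (2 * (nrm x + 2))) := by
            apply mul_lt_mul' (by linarith) hy' hd20 (by linarith)
          have e2' : (nrm x + 2) * (ε / (2 * (nrm x + 2))) = ε / 2 := by
            field_simp
          nlinarith
  have hBsub : ∀ x ∈ B, ∀ y ∈ B, x - y ∈ B := by
    intro x hx y hy
    have : x - y = x + (-1 : ℂ) • y := by rw [neg_one_smul]; abel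
    rw [this]
    exact hBadd _ hx _ (hBsmul _ _ hy)
  have hBclosed : IsClosed B := isClosed_closure
  -- choose an approximate preimage of the identity
  obtain ⟨o, ho, hob⟩ := Metric.mem_closure_iff.mp hI (1/100) (by norm_num)
  obtain ⟨b, hbB, rfl⟩ := ho
  have hb : ‖T b - 1‖ < 1/100 := by
    rw [dist_eq_norm, norm_sub_rev] at hob; exact hob
  set h : A := (2⁻¹ : ℂ) • (b + star b) with hh
  have hhB : h ∈ B := hBsmul _ _ (hBadd _ hbB _ (hBstar _ hbB))
  have hhsa : star h = h := by
    simp only [hh, star_smul, star_add, star_star]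
    rw [add_comm]
    congr 1
    simp
  set s : H →L[ℂ] H := 1 - T h with hs
  have hTh : T h = (2⁻¹ : ℂ) • (T b + star (T b)) := by
    rw [hh, map_smul, map_add, map_star]
  have hsnorm : ‖s‖ < 1/100 := by
    have hre : s = (2⁻¹ : ℂ) • ((1 - T b) + star (1 - T b)) := by
      rw [hs, hTh, star_sub, star_one]
      module
    have h1 : ‖(1 - T b) + star (1 - T b)‖ ≤ ‖T b - 1‖ + ‖T b - 1‖ := by
      have := norm_add_le ((1 : H →L[ℂ] H) - T b) (star ((1 : H →L[ℂ] H) - T b))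
      rwa [norm_star, norm_sub_rev] at this
    calc ‖s‖ = 2⁻¹ * ‖(1 - T b) + star (1 - T b)‖ := by
          rw [hre, norm_smul]; norm_num
      _ ≤ 2⁻¹ * (‖T b - 1‖ + ‖T b - 1‖) := by
          apply mul_le_mul_of_nonneg_left h1 (by norm_num)
      _ < 1/100 := by linarith
  set g : A := h - h * h with hg
  have hgB : g ∈ B := hBsub _ hhB _ (hBmul _ hhB _ hhB)
  have hgsa : star g = g := by
    rw [hg, star_sub, star_mul, hhsa]
  have hTg : T g = s - s * s := by
    rw [hg, map_sub, map_mul]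
    have : T h = 1 - s := by rw [hs]; abel
    rw [this]; noncomm_ring
  have hTgnorm : ‖T g‖ ≤ 1/50 := by
    rw [hTg]
    have h1 : ‖s - s * s‖ ≤ ‖s‖ + ‖s * s‖ := norm_sub_le _ _
    have h2 : ‖s * s‖ ≤ ‖s‖ * ‖s‖ := norm_mul_le _ _
    have h3 : (0:ℝ) ≤ ‖s‖ := norm_nonneg _
    nlinarith
  -- `T` is norm-contractive on self-adjoint elements of `B`
  have hTle : ∀ x ∈ B, star x = x → ‖T x‖ ^ p ≤ nrm x := by
    intro x hx hsa
    have hpow : ∀ n : ℕ, nrm (nupow x n) ≤ nrm x ^ (n + 1) := by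
      intro n
      induction n with
      | zero => simpa [nupow] using le_refl (nrm x)
      | succ n ih =>
        calc nrm (nupow x (n+1)) = nrm (x * nupow x n) := rfl
          _ ≤ nrm x * nrm (nupow x n) := hmulle _ _
          _ ≤ nrm x * nrm x ^ (n + 1) := mul_le_mul_of_nonneg_left ih (hnonneg x)
          _ = nrm x ^ (n + 1 + 1) := by ring
    refine le_of_tendsto (hlim x hx hsa) (Eventually.of_forall ?_)
    intro n
    have h1 : (0:ℝ) < (n:ℝ) + 1 := by positivity
    calc nrm (nupow x n) ^ (((n:ℝ) + 1)⁻¹)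
        ≤ (nrm x ^ (n + 1)) ^ (((n:ℝ) + 1)⁻¹) :=
          Real.rpow_le_rpow (hnonneg _) (hpow n) (by positivity)
      _ = nrm x := by
          rw [← Real.rpow_natCast (nrm x) (n + 1), ← Real.rpow_mul (hnonneg x)]
          push_cast
          rw [mul_inv_cancel₀ (ne_of_gt h1), Real.rpow_one]
  -- geometric tail estimates
  set q40 : ℝ := (1/40 : ℝ) ^ p with hq40
  set q10 : ℝ := (1/10 : ℝ) ^ p with hq10
  have hq40pos : 0 < q40 := Real.rpow_pos_of_pos (by norm_num) p
  have hq10pos : 0 < q10 := Real.rpow_pos_of_pos (by norm_num) p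
  have hq10lt : q10 < 1 := Real.rpow_lt_one (by norm_num) (by norm_num) hp0
  have hq4q40 : (4:ℝ) ^ p * q40 = q10 := by
    rw [hq40, hq10, ← Real.mul_rpow (by norm_num) (by norm_num)]
    norm_num
  have hTgp : ‖T g‖ ^ p < q40 := by
    apply Real.rpow_lt_rpow (norm_nonneg _) _ hp0
    calc ‖T g‖ ≤ 1/50 := hTgnorm
      _ < 1/40 := by norm_num
  obtain ⟨N, hN⟩ := eventually_atTop.mp ((hlim g hgB hgsa).eventually_lt_const hTgp)
  have hgtail : ∀ n, N ≤ n → nrm (nupow g n) ≤ q40 ^ (n + 1) := by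
    intro n hn
    have h2 := hN n hn
    have h3 : (0:ℝ) ≤ nrm (nupow g n) ^ (((n:ℝ) + 1)⁻¹) := Real.rpow_nonneg (hnonneg _) _
    have h4 : (nrm (nupow g n) ^ (((n:ℝ) + 1)⁻¹)) ^ (n + 1) ≤ q40 ^ (n + 1) :=
      pow_le_pow_left₀ h3 (le_of_lt h2) _
    calc nrm (nupow g n) = (nrm (nupow g n) ^ (((n:ℝ) + 1)⁻¹)) ^ (n + 1) := by
          rw [← Real.rpow_natCast (nrm (nupow g n) ^ (((n:ℝ)+1)⁻¹)) (n+1),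
            ← Real.rpow_mul (hnonneg _)]
          push_cast
          rw [inv_mul_cancel₀ (by positivity), Real.rpow_one]
      _ ≤ q40 ^ (n + 1) := h4
  -- the series defining the unit
  set t : ℕ → A := fun k => (catalan k : ℂ) • nupow g k with ht
  have hnrm_t : ∀ k, nrm (t k) = (catalan k : ℝ) ^ p * nrm (nupow g k) := by
    intro k
    rw [ht]
    simp only []
    rw [hsmul]
    congr 2
    rw [Complex.norm_natCast]
  have hcat : ∀ k, ((catalan k : ℝ)) ≤ (4:ℝ) ^ k := by
    intro k
    exact_mod_cast Nat.cast_le.mpr (catalan_le_four_pow k)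
  have httail : ∀ k, N ≤ k → nrm (t k) ≤ q40 * q10 ^ k := by
    intro k hk
    have h1 : (catalan k : ℝ) ^ p ≤ ((4:ℝ) ^ k) ^ p :=
      Real.rpow_le_rpow (by positivity) (hcat k) (le_of_lt hp0)
    have h2 : ((4:ℝ) ^ k) ^ p = ((4:ℝ) ^ p) ^ k := by
      rw [← Real.rpow_natCast (4:ℝ) k, ← Real.rpow_mul (by norm_num), mul_comm,
        Real.rpow_mul (by norm_num), Real.rpow_natCast]
    have h3 := hgtail k hk
    calc nrm (t k) = (catalan k : ℝ) ^ p * nrm (nupow g k) := hnrm_t k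
      _ ≤ ((4:ℝ) ^ p) ^ k * q40 ^ (k + 1) := by
          rw [← h2]
          exact mul_le_mul h1 h3 (hnonneg _) (by positivity)
      _ = q40 * (((4:ℝ) ^ p) * q40) ^ k := by ring
      _ = q40 * q10 ^ k := by rw [hq4q40]
  have hsumd : Summable (fun k => nrm (t k)) := by
    rw [← summable_nat_add_iff N]
    apply Summable.of_nonneg_of_le (fun n => hnonneg _) (fun n => ?_)
      ((summable_geometric_of_lt_one (le_of_lt hq10pos) hq10lt).mul_left (q40 * q10 ^ N))
    calc nrm (t (n + N)) ≤ q40 * q10 ^ (n + N) := httail _ (by omega)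
      _ = q40 * q10 ^ N * q10 ^ n := by ring
  set P : ℕ → A := fun m => h + ∑ k ∈ Finset.range m, t k with hP
  have hPcauchy : CauchySeq P := by
    apply cauchySeq_of_dist_le_of_summable (fun k => nrm (t k)) (fun n => ?_) hsumd
    rw [hdist]
    have hre : P n - P (n+1) = -(t n) := by
      simp only [hP, Finset.sum_range_succ]
      abel
    rw [hre, hnrm_neg]
  obtain ⟨e, he⟩ := cauchySeq_tendsto_of_complete hPcauchy
  -- membership of the partial sums and of `e` in `B`
  have hnupB : ∀ k, nupow g k ∈ B := by
    intro k
    induction k with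
    | zero => exact hgB
    | succ k ih => exact hBmul _ hgB _ ih
  have htB : ∀ k, t k ∈ B := fun k => hBsmul _ _ (hnupB k)
  have hsumB : ∀ m, (∑ k ∈ Finset.range m, t k) ∈ B := by
    intro m
    induction m with
    | zero => simpa using subset_closure S.zero_mem
    | succ m ih =>
      rw [Finset.sum_range_succ]
      exact hBadd _ ih _ (htB m)
  have hPB : ∀ m, P m ∈ B := fun m => hBadd _ hhB _ (hsumB m)
  have heB : e ∈ B := hBclosed.mem_of_tendsto he (Eventually.of_forall hPB)
  -- self-adjointness of the partial sums and of `e`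
  have hnupsa : ∀ k, star (nupow g k) = nupow g k := by
    intro k
    induction k with
    | zero => exact hgsa
    | succ k ih =>
      calc star (nupow g (k+1)) = star (g * nupow g k) := rfl
        _ = star (nupow g k) * star g := star_mul _ _
        _ = nupow g k * g := by rw [ih, hgsa]
        _ = g * nupow g k := (nupow_comm g k).symm
        _ = nupow g (k+1) := rfl
  have htsa : ∀ k, star (t k) = t k := by
    intro k
    calc star (t k) = star ((catalan k : ℂ) • nupow g k) := rfl
      _ = star ((catalan k : ℂ)) • star (nupow g k) := star_smul _ _
      _ = t k := by rw [hnupsa]; norm_num; rfl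
  have hPsa : ∀ m, star (P m) = P m := by
    intro m
    show star (h + ∑ k ∈ Finset.range m, t k) = h + ∑ k ∈ Finset.range m, t k
    rw [star_add, hhsa, star_sum]
    congr 1
    exact Finset.sum_congr rfl (fun k _ => htsa k)
  have hesa : star e = e := by
    have hcont : Tendsto (fun m => star (P m)) atTop (nhds (star e)) := by
      rw [Metric.tendsto_atTop] at he ⊢
      intro ε hε
      obtain ⟨M, hM⟩ := he ε hε
      refine ⟨M, fun n hn => ?_⟩
      have hd := hM n hn
      rw [hdist] at hd ⊢
      rwa [← star_sub, hstar]
    rw [show (fun m => star (P m)) = P from funext hPsa] at hcont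
    exact tendsto_nhds_unique hcont he
  -- `T` of the partial sums converges to `T e`
  have hTPe : Tendsto (fun m => T (P m)) atTop (nhds (T e)) := by
    rw [Metric.tendsto_atTop] at he ⊢
    intro ε hε
    have hεp : (0:ℝ) < ε ^ p := Real.rpow_pos_of_pos hε p
    obtain ⟨M, hM⟩ := he (ε ^ p) hεp
    refine ⟨M, fun n hn => ?_⟩
    have hd := hM n hn
    rw [hdist] at hd
    have hmem : P n - e ∈ B := hBsub _ (hPB n) _ heB
    have hsa2 : star (P n - e) = P n - e := by rw [star_sub, hPsa, hesa]
    have hble := hTle _ hmem hsa2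
    rw [dist_eq_norm]
    have hTsub : T (P n) - T e = T (P n - e) := (map_sub T _ _).symm
    rw [hTsub]
    by_contra hcon
    push_neg at hcon
    have hmono : ε ^ p ≤ ‖T (P n - e)‖ ^ p :=
      Real.rpow_le_rpow (le_of_lt hε) hcon (le_of_lt hp0)
    linarith
  -- the operator-side series
  set F : ℕ → (H →L[ℂ] H) := fun k => (catalan k : ℂ) • (T g) ^ (k+1) with hF
  have hTnup : ∀ k, T (nupow g k) = (T g) ^ (k + 1) := by
    intro k
    induction k with
    | zero => rw [pow_one]; rfl
    | succ k ih =>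
      calc T (nupow g (k+1)) = T (g * nupow g k) := rfl
        _ = T g * T (nupow g k) := map_mul _ _ _
        _ = T g * (T g) ^ (k+1) := by rw [ih]
        _ = (T g) ^ (k+1+1) := (pow_succ' _ _).symm
  have hTP : ∀ m, T (P m) = T h + ∑ k ∈ Finset.range m, F k := by
    intro m
    show T (h + ∑ k ∈ Finset.range m, t k) = _
    rw [map_add, map_sum]
    congr 1
    refine Finset.sum_congr rfl (fun k _ => ?_)
    show T ((catalan k : ℂ) • nupow g k) = F k
    rw [map_smul, hTnup]
  have hFnorm : ∀ k, ‖F k‖ ≤ (1/50 : ℝ) * (2/25) ^ k := by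
    intro k
    have hb1 : ‖(T g) ^ (k+1)‖ ≤ (1/50:ℝ) ^ (k+1) := by
      calc ‖(T g) ^ (k+1)‖ ≤ ‖T g‖ ^ (k+1) := norm_pow_le' _ (Nat.succ_pos k)
        _ ≤ (1/50:ℝ) ^ (k+1) := pow_le_pow_left₀ (norm_nonneg _) hTgnorm _
    calc ‖F k‖ = (catalan k : ℝ) * ‖(T g) ^ (k+1)‖ := by
          show ‖(catalan k : ℂ) • (T g) ^ (k+1)‖ = _
          rw [norm_smul]
          congr 1
          simp
      _ ≤ (4:ℝ)^k * ((1/50:ℝ) ^ (k+1)) :=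
          mul_le_mul (hcat k) hb1 (norm_nonneg _) (by positivity)
      _ = (1/50:ℝ) * (2/25) ^ k := by
          have h225 : ((2:ℝ)/25)^k = (4:ℝ)^k * (1/50:ℝ)^k := by
            rw [← mul_pow]; norm_num
          rw [h225]; ring
  have hFnormsum : Summable (fun k => ‖F k‖) :=
    Summable.of_nonneg_of_le (fun k => norm_nonneg _) hFnorm
      ((summable_geometric_of_lt_one (by norm_num) (by norm_num)).mul_left (1/50 : ℝ))
  have hFsum : Summable F := hFnormsum.of_norm
  have hQtend : Tendsto (fun m => ∑ k ∈ Finset.range m, F k) atTop (nhds (∑' k, F k)) :=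
    hFsum.hasSum.tendsto_sum_nat
  set c : H →L[ℂ] H := ∑' k, F k with hc
  have hTeh : T e = T h + c := by
    have h1 : Tendsto (fun m => T h + ∑ k ∈ Finset.range m, F k) atTop (nhds (T h + c)) :=
      hQtend.const_add (T h)
    have h2 : (fun m => T h + ∑ k ∈ Finset.range m, F k) = fun m => T (P m) :=
      funext fun m => (hTP m).symm
    rw [h2] at h1
    exact tendsto_nhds_unique hTPe h1
  -- Cauchy product and the Catalan recurrence
  have hinner : ∀ n, ∑ k ∈ Finset.range (n+1), F k * F (n - k) = F (n+1) := by
    intro n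
    have hterm : ∀ k ∈ Finset.range (n+1), F k * F (n-k)
        = ((catalan k * catalan (n-k) : ℕ) : ℂ) • (T g) ^ (n+2) := by
      intro k hk
      have hkn : k ≤ n := Nat.lt_succ_iff.mp (Finset.mem_range.mp hk)
      show ((catalan k : ℂ) • (T g)^(k+1)) * ((catalan (n-k) : ℂ) • (T g)^(n-k+1)) = _
      rw [smul_mul_smul_comm, ← pow_add]
      congr 1
      · push_cast; ring
      · congr 1; omega
    rw [Finset.sum_congr rfl hterm, ← Finset.sum_smul]
    have hcatsum : (∑ k ∈ Finset.range (n+1), ((catalan k * catalan (n-k) : ℕ) : ℂ))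
        = ((catalan (n+1) : ℕ) : ℂ) := by
      rw [← Nat.cast_sum]
      congr 1
      rw [catalan_succ',
        Finset.Nat.sum_antidiagonal_eq_sum_range_succ (fun x y => catalan x * catalan y) n]
    rw [hcatsum]
  have hcc : c * c = c - (s - s * s) := by
    have h1 : c * c = ∑' n, ∑ k ∈ Finset.range (n+1), F k * F (n-k) :=
      tsum_mul_tsum_eq_tsum_sum_range_of_summable_norm hFnormsum hFnormsum
    have h2 : c * c = ∑' n, F (n+1) := by
      rw [h1]; exact tsum_congr hinner
    have h3 : (∑' n, F n) = F 0 + ∑' n, F (n+1) := Summable.tsum_eq_zero_add hFsum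
    have hF0 : F 0 = s - s * s := by
      show (catalan 0 : ℂ) • (T g)^1 = s - s * s
      rw [← hTg]
      norm_num
    have h4 : (∑' n, F (n+1)) = c - F 0 := by
      rw [hc, h3]; abel
    rw [h2, h4, hF0]
  -- `c` commutes with `s`
  have hcomm_s : s * c = c * s := by
    have hsg : s * (T g) = (T g) * s := by rw [hTg]; noncomm_ring
    have hsF : ∀ k, s * F k = F k * s := by
      intro k
      show s * ((catalan k:ℂ) • (T g)^(k+1)) = ((catalan k:ℂ) • (T g)^(k+1)) * s
      rw [mul_smul_comm, smul_mul_assoc]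
      congr 1
      exact Commute.pow_right hsg (k+1)
    have h1 : Tendsto (fun m => s * ∑ k ∈ Finset.range m, F k) atTop (nhds (s * c)) :=
      hQtend.const_mul s
    have h2 : Tendsto (fun m => (∑ k ∈ Finset.range m, F k) * s) atTop (nhds (c * s)) :=
      hQtend.mul_const s
    have h3 : (fun m => s * ∑ k ∈ Finset.range m, F k)
        = (fun m => (∑ k ∈ Finset.range m, F k) * s) := by
      funext m
      rw [Finset.mul_sum, Finset.sum_mul]
      exact Finset.sum_congr rfl (fun k _ => hsF k)
    rw [h3] at h1
    exact tendsto_nhds_unique h1 h2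
  -- norm bound for `c`
  have hcnorm : ‖c‖ ≤ 1/25 := by
    have h1 : ‖c‖ ≤ ∑' k, ‖F k‖ := norm_tsum_le_tsum_norm hFnormsum
    have h2 : (∑' k, ‖F k‖) ≤ ∑' k, (1/50:ℝ) * (2/25)^k :=
      Summable.tsum_le_tsum hFnorm hFnormsum
        ((summable_geometric_of_lt_one (by norm_num) (by norm_num)).mul_left _)
    have h3 : (∑' k, (1/50:ℝ) * (2/25)^k) = (1/50:ℝ) * (1 - 2/25)⁻¹ := by
      rw [tsum_mul_left, tsum_geometric_of_lt_one (by norm_num) (by norm_num)]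
    rw [h3] at h2
    calc ‖c‖ ≤ (1/50:ℝ) * (1 - 2/25)⁻¹ := le_trans h1 h2
      _ ≤ 1/25 := by norm_num
  -- conclude `c = s`, hence `T e = 1`
  have hceq : c = s := by
    have hkey : (c - s) * (c + s) = c - s := by
      have hx : c * c - s * s = c - s := by rw [hcc]; abel
      calc (c - s) * (c + s) = c*c + c*s - s*c - s*s := by noncomm_ring
        _ = c*c - s*s := by rw [hcomm_s]; abel
        _ = c - s := hx
    have hn : ‖c - s‖ ≤ ‖c - s‖ * ‖c + s‖ := by
      calc ‖c - s‖ = ‖(c - s) * (c + s)‖ := by rw [hkey]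
        _ ≤ ‖c - s‖ * ‖c + s‖ := norm_mul_le _ _
    have hcs : ‖c + s‖ ≤ 1/25 + 1/100 := by
      calc ‖c + s‖ ≤ ‖c‖ + ‖s‖ := norm_add_le _ _
        _ ≤ 1/25 + 1/100 := by linarith [le_of_lt hsnorm]
    have h0 : ‖c - s‖ = 0 := by
      nlinarith [norm_nonneg (c - s), norm_nonneg (c + s)]
    exact sub_eq_zero.mp (norm_eq_zero.mp h0)
  have hTe : T e = 1 := by
    rw [hTeh, hceq, hs]
    abel
  exact ⟨e, heB, hTe, fun a =>
    ⟨hinj (by rw [map_mul, hTe, one_mul]), hinj (by rw [map_mul, hTe, mul_one])⟩⟩
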